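/- Let N_s, A_u, n, k be natural numbers with T = N_s - A_u even, T > 0, n < T, and k ≥ 1. For natural numbers A_w, A_l with A_w + A_l = T, define the tail sum p(A_w, A_l) = Σ_{(i,j) : i ≥ 0, j ≥ 0, i - j ≥ k, i + j ≤ n} C(A_w, i) · C(A_l, j) · C(A_u, n - i - j) / C(N_s, n), where C(m, r) denotes the binomial coefficient (taken to be 0 when r > m). Then for every even natural number c with 0 < c ≤ T, p(T/2 + c/2, T/2 - c/2) ≥ p(T/2, T/2). In other words, over the null region {(A_w, A_l) : A_w + A_l = T, A_w - A_l ≤ c}, the tail probability is maximized on the boundary A_w - A_l = c. -/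

import Mathlib

open Finset

/-- The conditional tri-hypergeometric tail probability: the chance that a simple
random sample of size `n` from `Ns` ballots (of which `Aw` are winner-only ballots,
`Al` are loser-only ballots, and `Au` are the rest) contains `i` winner-only
and `j` loser-only ballots with `i - j ≥ k`. -/
def triHypTail (Ns Au n k Aw Al : ℕ) : ℚ :=
  ∑ ij ∈ (range (n + 1) ×ˢ range (n + 1)).filter
      (fun ij => ij.2 + k ≤ ij.1 ∧ ij.1 + ij.2 ≤ n),
    (Nat.choose Aw ij.1 * Nat.choose Al ij.2 * Nat.choose Au (n - ij.1 - ij.2) : ℚ)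
      / Nat.choose Ns n

/-- Natural-number version of the tail numerator, as a double sum with indicators. -/
def triF (Au n k Aw Al : ℕ) : ℕ :=
  ∑ i ∈ range (n + 1), ∑ j ∈ range (n + 1),
    if j + k ≤ i ∧ i + j ≤ n then
      Nat.choose Aw i * Nat.choose Al j * Nat.choose Au (n - i - j) else 0

lemma triHypTail_eq_triF (Ns Au n k Aw Al : ℕ) :
    triHypTail Ns Au n k Aw Al = (triF Au n k Aw Al : ℚ) / (Nat.choose Ns n : ℚ) := by
  unfold triHypTail triF
  rw [← Finset.sum_div]
  congr 1
  rw [Finset.sum_filter, Finset.sum_product]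
  push_cast [apply_ite (Nat.cast : ℕ → ℚ)]
  rfl

/-- Splitting off the loser-side Pascal term. -/
lemma triF_split_loser (Au n k Aw B : ℕ) :
    triF Au n k Aw (B + 1) = triF Au n k Aw B +
      ∑ i ∈ range (n + 1), ∑ j ∈ range (n + 1),
        if 1 ≤ j ∧ j + k ≤ i ∧ i + j ≤ n then
          Nat.choose Aw i * Nat.choose B (j - 1) * Nat.choose Au (n - i - j) else 0 := by
  unfold triF
  rw [← Finset.sum_add_distrib]
  refine Finset.sum_congr rfl fun i _ => ?_
  rw [← Finset.sum_add_distrib]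
  refine Finset.sum_congr rfl fun j _ => ?_
  rcases j with _ | j
  · simp
  · simp only [Nat.add_sub_cancel]
    by_cases hc : j + 1 + k ≤ i ∧ i + (j + 1) ≤ n
    · rw [if_pos hc, if_pos hc, if_pos ⟨Nat.succ_le_succ (Nat.zero_le _), hc.1, hc.2⟩,
        Nat.choose_succ_succ]
      ring
    · rw [if_neg hc, if_neg hc, if_neg (by tauto)]

/-- Splitting off the winner-side Pascal term. -/
lemma triF_split_winner (Au n k Aw B : ℕ) (hk : 1 ≤ k) :
    triF Au n k (Aw + 1) B = triF Au n k Aw B +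
      ∑ i ∈ range (n + 1), ∑ j ∈ range (n + 1),
        if 1 ≤ i ∧ j + k ≤ i ∧ i + j ≤ n then
          Nat.choose Aw (i - 1) * Nat.choose B j * Nat.choose Au (n - i - j) else 0 := by
  unfold triF
  rw [← Finset.sum_add_distrib]
  refine Finset.sum_congr rfl fun i _ => ?_
  rw [← Finset.sum_add_distrib]
  refine Finset.sum_congr rfl fun j _ => ?_
  rcases i with _ | i
  · rw [if_neg (by omega), if_neg (by omega), if_neg (by omega)]
  · simp only [Nat.add_sub_cancel]
    by_cases hc : j + k ≤ i + 1 ∧ i + 1 + j ≤ n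
    · rw [if_pos hc, if_pos hc, if_pos ⟨Nat.succ_le_succ (Nat.zero_le _), hc.1, hc.2⟩,
        Nat.choose_succ_succ]
      ring
    · rw [if_neg hc, if_neg hc, if_neg (by tauto)]

/-- The key comparison: the loser-side correction is at most the winner-side one,
via the injection `(i, j) ↦ (i + 1, j - 1)` on the supports. -/
lemma triF_key (Au n k Aw B : ℕ) (hk : 1 ≤ k) :
    (∑ i ∈ range (n + 1), ∑ j ∈ range (n + 1),
        if 1 ≤ j ∧ j + k ≤ i ∧ i + j ≤ n then
          Nat.choose Aw i * Nat.choose B (j - 1) * Nat.choose Au (n - i - j) else 0)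
    ≤ ∑ i ∈ range (n + 1), ∑ j ∈ range (n + 1),
        if 1 ≤ i ∧ j + k ≤ i ∧ i + j ≤ n then
          Nat.choose Aw (i - 1) * Nat.choose B j * Nat.choose Au (n - i - j) else 0 := by
  rw [← Finset.sum_product', ← Finset.sum_product',
    ← Finset.sum_filter (s := range (n + 1) ×ˢ range (n + 1))
      (p := fun ij : ℕ × ℕ => 1 ≤ ij.2 ∧ ij.2 + k ≤ ij.1 ∧ ij.1 + ij.2 ≤ n),
    ← Finset.sum_filter (s := range (n + 1) ×ˢ range (n + 1))
      (p := fun ij : ℕ × ℕ => 1 ≤ ij.1 ∧ ij.2 + k ≤ ij.1 ∧ ij.1 + ij.2 ≤ n)]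
  set S1 := (range (n + 1) ×ˢ range (n + 1)).filter
      (fun ij : ℕ × ℕ => 1 ≤ ij.2 ∧ ij.2 + k ≤ ij.1 ∧ ij.1 + ij.2 ≤ n) with hS1
  set S2 := (range (n + 1) ×ˢ range (n + 1)).filter
      (fun ij : ℕ × ℕ => 1 ≤ ij.1 ∧ ij.2 + k ≤ ij.1 ∧ ij.1 + ij.2 ≤ n) with hS2
  have hmem1 : ∀ ij ∈ S1, ij.1 ≤ n ∧ ij.2 ≤ n ∧ 1 ≤ ij.2 ∧ ij.2 + k ≤ ij.1 ∧ ij.1 + ij.2 ≤ n := by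
    intro ij hij
    rw [hS1, Finset.mem_filter, Finset.mem_product, Finset.mem_range, Finset.mem_range] at hij
    omega
  calc (∑ ij ∈ S1, Nat.choose Aw ij.1 * Nat.choose B (ij.2 - 1) * Nat.choose Au (n - ij.1 - ij.2))
      = ∑ ij ∈ S1.image (fun ij : ℕ × ℕ => (ij.1 + 1, ij.2 - 1)),
          Nat.choose Aw (ij.1 - 1) * Nat.choose B ij.2 * Nat.choose Au (n - ij.1 - ij.2) := by
        rw [Finset.sum_image]
        · refine Finset.sum_congr rfl fun ij hij => ?_
          obtain ⟨h1, h2, h3, h4, h5⟩ := hmem1 ij hij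
          simp only [Nat.add_sub_cancel]
          have harg : n - (ij.1 + 1) - (ij.2 - 1) = n - ij.1 - ij.2 := by omega
          rw [harg]
        · intro a ha b hb hab
          obtain ⟨_, _, ha1, _, _⟩ := hmem1 a ha
          obtain ⟨_, _, hb1, _, _⟩ := hmem1 b hb
          simp only [Prod.mk.injEq] at hab
          ext <;> omega
    _ ≤ ∑ ij ∈ S2, Nat.choose Aw (ij.1 - 1) * Nat.choose B ij.2 * Nat.choose Au (n - ij.1 - ij.2) := by
        apply Finset.sum_le_sum_of_subset
        intro ij hij
        rw [Finset.mem_image] at hij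
        obtain ⟨a, ha, rfl⟩ := hij
        obtain ⟨h1, h2, h3, h4, h5⟩ := hmem1 a ha
        rw [hS2, Finset.mem_filter, Finset.mem_product, Finset.mem_range, Finset.mem_range]
        refine ⟨⟨by omega, by omega⟩, by omega, by omega, by omega⟩

/-- Single-step monotonicity: moving one ballot from the loser to the winner
does not decrease the tail numerator. -/
lemma triF_step (Au n k Aw B : ℕ) (hk : 1 ≤ k) :
    triF Au n k Aw (B + 1) ≤ triF Au n k (Aw + 1) B := by
  rw [triF_split_loser, triF_split_winner Au n k Aw B hk]
  exact Nat.add_le_add_left (triF_key Au n k Aw B hk) _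

lemma triF_mono (Au n k Aw Al : ℕ) (hk : 1 ≤ k) :
    ∀ m, m ≤ Al → triF Au n k Aw Al ≤ triF Au n k (Aw + m) (Al - m) := by
  intro m
  induction m with
  | zero => simp
  | succ m ih =>
    intro hm
    refine le_trans (ih (by omega)) ?_
    have h := triF_step Au n k (Aw + m) (Al - m - 1) hk
    have e1 : Al - m - 1 + 1 = Al - m := by omega
    rw [e1] at h
    have e2 : Al - (m + 1) = Al - m - 1 := by omega
    have e3 : Aw + (m + 1) = Aw + m + 1 := by omega
    rw [e2, e3]
    exact h

/-- Over the null region `{(A_w, A_l) : A_w + A_l = T, A_w - A_l ≤ c}`, the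
tri-hypergeometric tail probability is maximized on the boundary `A_w - A_l = c`. -/
theorem triHypTail_max_on_boundary
    (Ns Au n k T : ℕ) (hT : T = Ns - Au) (hTeven : Even T) (hTpos : 0 < T)
    (hn : n < T) (hk : 1 ≤ k) :
    ∀ c : ℕ, Even c → 0 < c → c ≤ T →
      triHypTail Ns Au n k (T / 2) (T / 2) ≤
        triHypTail Ns Au n k (T / 2 + c / 2) (T / 2 - c / 2) := by
  intro c hceven hcpos hcle
  obtain ⟨a, ha⟩ := hceven
  obtain ⟨b, hb⟩ := hTeven
  have hnNs : n ≤ Ns := by omega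
  have hD : (0 : ℚ) < (Nat.choose Ns n : ℚ) := by
    exact_mod_cast Nat.choose_pos hnNs
  rw [triHypTail_eq_triF, triHypTail_eq_triF]
  have hF := triF_mono Au n k (T / 2) (T / 2) hk (c / 2) (by omega)
  have : (triF Au n k (T / 2) (T / 2) : ℚ) ≤
      (triF Au n k (T / 2 + c / 2) (T / 2 - c / 2) : ℚ) := by exact_mod_cast hF
  gcongr
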